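/- arXiv:2307.15153 — 4 statements merged into one kernel-verified Lean document; each statement's English description precedes it below -/
import Mathlib

section
/- Let ν ∈ W^{2,∞}(ℝ), ν̄ ∈ W^{1,∞}(ℝ) with ν̄(0)=0, and μ ∈ (C^1 ∩ W^{1,∞})(ℝ). For u, v ∈ (L^1 ∩ L^∞)(ℝ), define U(x) = ν((μ * ν̄(u))(x)) and V(x) = ν((μ * ν̄(v))(x)). Then for all x, |V'(x) − U'(x)| ≤ (‖ν'‖_∞ ‖ν̄'‖_∞ ‖μ'‖_∞ + ‖ν̄'‖_∞^2 ‖μ'‖_∞ ‖μ‖_∞ ‖ν''‖_∞ ‖u‖_{L^1}) ‖u − v‖_{L^1(ℝ)}. -/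
open MeasureTheory Metric

private lemma aux_hasDeriv (μ g : ℝ → ℝ) (Cμ Cμ' : ℝ)
    (hμC1 : ContDiff ℝ 1 μ) (hμb : ∀ x, |μ x| ≤ Cμ) (hμ'b : ∀ x, |deriv μ x| ≤ Cμ')
    (hg : Integrable g) (x : ℝ) :
    HasDerivAt (fun y => ∫ ξ, μ (y - ξ) * g ξ) (∫ ξ, deriv μ (x - ξ) * g ξ) x := by
  have hμc : Continuous μ := hμC1.continuous
  have hμ'c : Continuous (deriv μ) := hμC1.continuous_deriv le_rfl
  have h := hasDerivAt_integral_of_dominated_loc_of_deriv_le (𝕜 := ℝ)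
    (F := fun y ξ => μ (y - ξ) * g ξ) (F' := fun y ξ => deriv μ (y - ξ) * g ξ)
    (bound := fun ξ => Cμ' * |g ξ|) (s := ball x 1) (x₀ := x) (ball_mem_nhds x one_pos)
    (Filter.Eventually.of_forall fun y =>
      ((hμc.comp (continuous_const.sub continuous_id)).aestronglyMeasurable.mul
        hg.1))
    (hg.bdd_mul (hμc.comp (continuous_const.sub continuous_id)).aestronglyMeasurable
      (c := Cμ) (.of_forall fun ξ => by simpa using hμb (x - ξ)))
    ((hμ'c.comp (continuous_const.sub continuous_id)).aestronglyMeasurable.mul hg.1)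
    (Filter.Eventually.of_forall fun ξ y _ => by
      simp only [Real.norm_eq_abs, abs_mul]
      exact mul_le_mul_of_nonneg_right (hμ'b _) (abs_nonneg _))
    (hg.abs.const_mul _)
    (Filter.Eventually.of_forall fun ξ y _ => by
      have h1 : HasDerivAt (fun y : ℝ => y - ξ) 1 y := (hasDerivAt_id y).sub_const ξ
      have h2 : HasDerivAt μ (deriv μ (y - ξ)) (y - ξ) :=
        (hμC1.differentiable one_ne_zero (y - ξ)).hasDerivAt
      simpa using (h2.comp y h1).mul_const (g ξ))
  exact h.2

private lemma aux_int_bound (w g h : ℝ → ℝ) (c c2 : ℝ) (hc : 0 ≤ c)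
    (hw : ∀ ξ, |w ξ| ≤ c) (hwg : Integrable (fun ξ => w ξ * g ξ))
    (hgh : ∀ ξ, |g ξ| ≤ c2 * h ξ) (hh : Integrable h) :
    |∫ ξ, w ξ * g ξ| ≤ c * c2 * ∫ ξ, h ξ := by
  calc |∫ ξ, w ξ * g ξ| ≤ ∫ ξ, (c * c2) * h ξ := by
        rw [← Real.norm_eq_abs]
        refine norm_integral_le_of_norm_le (hh.const_mul _) (.of_forall fun ξ => ?_)
        rw [Real.norm_eq_abs, abs_mul, mul_assoc]
        exact mul_le_mul (hw ξ) (hgh ξ) (abs_nonneg _) hc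
    _ = c * c2 * ∫ ξ, h ξ := integral_const_mul _ _

/-- L∞ bound on the difference of the derivatives of the
nonlocal velocities. -/
theorem nonlocal_velocity_deriv_Linfty_bound
    (ν νb μ u v : ℝ → ℝ) (Cν' Cν'' Cμ Cμ' Cνb' : ℝ)
    (hνC2 : ContDiff ℝ 2 ν)
    (hν1 : ∀ a : ℝ, |deriv ν a| ≤ Cν')
    (hν2 : ∀ a : ℝ, |deriv (deriv ν) a| ≤ Cν'')
    (hμC1 : ContDiff ℝ 1 μ)
    (hμb : ∀ x : ℝ, |μ x| ≤ Cμ)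
    (hμ'b : ∀ x : ℝ, |deriv μ x| ≤ Cμ')
    (hνb : ∀ a b : ℝ, |νb a - νb b| ≤ Cνb' * |a - b|)
    (hνb0 : νb 0 = 0)
    (hu : Integrable u) (hv : Integrable v)
    (hum : Measurable u) (hvm : Measurable v)
    (Mu Mv : ℝ) (hub : ∀ x, |u x| ≤ Mu) (hvb : ∀ x, |v x| ≤ Mv) :
    ∀ x : ℝ,
      |deriv (fun y => ν (∫ ξ, μ (y - ξ) * νb (v ξ))) x
        - deriv (fun y => ν (∫ ξ, μ (y - ξ) * νb (u ξ))) x|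
        ≤ (Cν' * Cνb' * Cμ' + Cνb' ^ 2 * Cμ' * Cμ * Cν'' * ∫ ξ, |u ξ|)
            * ∫ ξ, |u ξ - v ξ| := by
  intro x
  have hCν' : 0 ≤ Cν' := le_trans (abs_nonneg _) (hν1 0)
  have hCν'' : 0 ≤ Cν'' := le_trans (abs_nonneg _) (hν2 0)
  have hCμ : 0 ≤ Cμ := le_trans (abs_nonneg _) (hμb 0)
  have hCμ' : 0 ≤ Cμ' := le_trans (abs_nonneg _) (hμ'b 0)
  have hCνb' : 0 ≤ Cνb' := by
    have h := hνb 1 0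
    simp at h
    linarith [abs_nonneg (νb 1 - νb 0), h]
  have hνbL : ∀ a : ℝ, |νb a| ≤ Cνb' * |a| := fun a => by
    simpa [hνb0] using hνb a 0
  have hνbc : Continuous νb := by
    have : LipschitzWith (Real.toNNReal Cνb') νb := by
      refine LipschitzWith.of_dist_le_mul fun a b => ?_
      rw [Real.dist_eq, Real.dist_eq, Real.coe_toNNReal _ hCνb']
      exact hνb a b
    exact this.continuous
  have hgu : Integrable (fun ξ => νb (u ξ)) := by
    refine Integrable.mono (hu.const_mul Cνb') (hνbc.measurable.comp hum).aestronglyMeasurable ?_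
    refine Filter.Eventually.of_forall fun ξ => ?_
    simp only [Real.norm_eq_abs, abs_mul, abs_abs]
    exact le_trans (hνbL _) (by rw [abs_of_nonneg hCνb'])
  have hgv : Integrable (fun ξ => νb (v ξ)) := by
    refine Integrable.mono (hv.const_mul Cνb') (hνbc.measurable.comp hvm).aestronglyMeasurable ?_
    refine Filter.Eventually.of_forall fun ξ => ?_
    simp only [Real.norm_eq_abs, abs_mul, abs_abs]
    exact le_trans (hνbL _) (by rw [abs_of_nonneg hCνb'])
  have hμ'c : Continuous (deriv μ) := hμC1.continuous_deriv le_rfl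
  have hwm : AEStronglyMeasurable (fun ξ => deriv μ (x - ξ)) volume :=
    (hμ'c.comp (continuous_const.sub continuous_id)).aestronglyMeasurable
  have hintGu : Integrable (fun ξ => deriv μ (x - ξ) * νb (u ξ)) :=
    hgu.bdd_mul hwm (c := Cμ') (.of_forall fun ξ => by simpa using hμ'b (x - ξ))
  have hintGv : Integrable (fun ξ => deriv μ (x - ξ) * νb (v ξ)) :=
    hgv.bdd_mul hwm (c := Cμ') (.of_forall fun ξ => by simpa using hμ'b (x - ξ))
  have hμm : AEStronglyMeasurable (fun ξ => μ (x - ξ)) volume :=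
    (hμC1.continuous.comp (continuous_const.sub continuous_id)).aestronglyMeasurable
  have hintFu : Integrable (fun ξ => μ (x - ξ) * νb (u ξ)) :=
    hgu.bdd_mul hμm (c := Cμ) (.of_forall fun ξ => by simpa using hμb (x - ξ))
  have hintFv : Integrable (fun ξ => μ (x - ξ) * νb (v ξ)) :=
    hgv.bdd_mul hμm (c := Cμ) (.of_forall fun ξ => by simpa using hμb (x - ξ))
  set Fu : ℝ → ℝ := fun y => ∫ ξ, μ (y - ξ) * νb (u ξ) with hFu
  set Fv : ℝ → ℝ := fun y => ∫ ξ, μ (y - ξ) * νb (v ξ) with hFv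
  set Gu : ℝ := ∫ ξ, deriv μ (x - ξ) * νb (u ξ) with hGu
  set Gv : ℝ := ∫ ξ, deriv μ (x - ξ) * νb (v ξ) with hGv
  have hdu : HasDerivAt Fu Gu x := aux_hasDeriv μ _ Cμ Cμ' hμC1 hμb hμ'b hgu x
  have hdv : HasDerivAt Fv Gv x := aux_hasDeriv μ _ Cμ Cμ' hμC1 hμb hμ'b hgv x
  have hνd : Differentiable ℝ ν := hνC2.differentiable two_ne_zero
  have hDu : deriv (fun y => ν (∫ ξ, μ (y - ξ) * νb (u ξ))) x = deriv ν (Fu x) * Gu :=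
    (((hνd (Fu x)).hasDerivAt).comp x hdu).deriv
  have hDv : deriv (fun y => ν (∫ ξ, μ (y - ξ) * νb (v ξ))) x = deriv ν (Fv x) * Gv :=
    (((hνd (Fv x)).hasDerivAt).comp x hdv).deriv
  rw [hDu, hDv]
  have huv : Integrable (fun ξ => |u ξ - v ξ|) := (hu.sub hv).abs
  have hdiffb : ∀ ξ, |νb (v ξ) - νb (u ξ)| ≤ Cνb' * |u ξ - v ξ| := fun ξ => by
    rw [abs_sub_comm (u ξ)]
    exact hνb _ _
  have hgd : Integrable (fun ξ => νb (v ξ) - νb (u ξ)) := hgv.sub hgu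
  -- bound on Gv - Gu
  have hGdiff : |Gv - Gu| ≤ Cμ' * Cνb' * ∫ ξ, |u ξ - v ξ| := by
    have heq : Gv - Gu = ∫ ξ, deriv μ (x - ξ) * (νb (v ξ) - νb (u ξ)) := by
      rw [hGv, hGu, ← integral_sub hintGv hintGu]
      exact integral_congr_ae (.of_forall fun ξ => by simp [mul_sub])
    rw [heq]
    exact aux_int_bound _ _ _ Cμ' Cνb' hCμ' (fun ξ => hμ'b _)
      (hgd.bdd_mul hwm (c := Cμ') (.of_forall fun ξ => by simpa using hμ'b (x - ξ))) hdiffb huv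
  -- bound on Fv x - Fu x
  have hFdiff : |Fv x - Fu x| ≤ Cμ * Cνb' * ∫ ξ, |u ξ - v ξ| := by
    have heq : Fv x - Fu x = ∫ ξ, μ (x - ξ) * (νb (v ξ) - νb (u ξ)) := by
      rw [hFv, hFu]
      simp only
      rw [← integral_sub hintFv hintFu]
      exact integral_congr_ae (.of_forall fun ξ => by simp [mul_sub])
    rw [heq]
    exact aux_int_bound _ _ _ Cμ Cνb' hCμ (fun ξ => hμb _)
      (hgd.bdd_mul hμm (c := Cμ) (.of_forall fun ξ => by simpa using hμb (x - ξ))) hdiffb huv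
  -- bound on Gu
  have hGub : |Gu| ≤ Cμ' * Cνb' * ∫ ξ, |u ξ| := by
    rw [hGu]
    exact aux_int_bound _ _ _ Cμ' Cνb' hCμ' (fun ξ => hμ'b _) hintGu
      (fun ξ => hνbL _) hu.abs
  -- Lipschitz bound on deriv ν
  have hν'diff : Differentiable ℝ (deriv ν) := by
    have h2 : ContDiff ℝ ((1 : ℕ) + 1) ν := by exact_mod_cast hνC2
    exact (contDiff_succ_iff_deriv.mp h2).2.2.differentiable one_ne_zero
  have hν'lip : |deriv ν (Fv x) - deriv ν (Fu x)| ≤ Cν'' * |Fv x - Fu x| := by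
    have := Convex.norm_image_sub_le_of_norm_deriv_le
      (f := deriv ν) (s := Set.univ)
      (fun y _ => hν'diff y)
      (fun y _ => by simpa using hν2 y) convex_univ (Set.mem_univ (Fu x))
      (Set.mem_univ (Fv x))
    simpa [Real.norm_eq_abs] using this
  -- conclude
  have hI : 0 ≤ ∫ ξ, |u ξ - v ξ| := integral_nonneg fun ξ => abs_nonneg _
  have hIu : 0 ≤ ∫ ξ, |u ξ| := integral_nonneg fun ξ => abs_nonneg _
  have key : deriv ν (Fv x) * Gv - deriv ν (Fu x) * Gu
      = deriv ν (Fv x) * (Gv - Gu) + (deriv ν (Fv x) - deriv ν (Fu x)) * Gu := by ring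
  rw [key]
  calc |deriv ν (Fv x) * (Gv - Gu) + (deriv ν (Fv x) - deriv ν (Fu x)) * Gu|
      ≤ |deriv ν (Fv x)| * |Gv - Gu| + |deriv ν (Fv x) - deriv ν (Fu x)| * |Gu| := by
        rw [← abs_mul, ← abs_mul]; exact abs_add_le _ _
    _ ≤ Cν' * (Cμ' * Cνb' * ∫ ξ, |u ξ - v ξ|)
        + (Cν'' * (Cμ * Cνb' * ∫ ξ, |u ξ - v ξ|)) * (Cμ' * Cνb' * ∫ ξ, |u ξ|) := by
        have h1 : |deriv ν (Fv x)| * |Gv - Gu| ≤ Cν' * (Cμ' * Cνb' * ∫ ξ, |u ξ - v ξ|) :=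
          mul_le_mul (hν1 _) hGdiff (abs_nonneg _) hCν'
        have h2 : |deriv ν (Fv x) - deriv ν (Fu x)| * |Gu|
            ≤ (Cν'' * (Cμ * Cνb' * ∫ ξ, |u ξ - v ξ|)) * (Cμ' * Cνb' * ∫ ξ, |u ξ|) := by
          refine mul_le_mul ?_ hGub (abs_nonneg _) (by positivity)
          exact hν'lip.trans (mul_le_mul_of_nonneg_left hFdiff hCν'')
        linarith
    _ = (Cν' * Cνb' * Cμ' + Cνb' ^ 2 * Cμ' * Cμ * Cν'' * ∫ ξ, |u ξ|)
        * ∫ ξ, |u ξ - v ξ| := by ring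
end

section
/- Consider the Lax–Friedrichs type marching formula u_i^{n+1} = u_i^n − λ(F(ν(c^n_{i+1/2}), s_i u_i^n, s_{i+1} u_{i+1}^n) − F(ν(c^n_{i−1/2}), s_{i−1} u_{i−1}^n, s_i u_i^n)) with F(a,b,c) = (a/2)(f(b)+f(c)) − Θ(c−b)/(2λ). Suppose f is Lipschitz with f(0)=0, ν bounded, s_i ≥ s_min > 0, s_i ≤ S, Θ ∈ (0, 2/(3S)), and the CFL condition λ ≤ min(1, 4−6ΘS, 6ΘS)/(1 + 6 S Lip(f) ‖ν‖_∞) holds. If u_i^n ≥ 0 for all i ∈ ℤ, then u_i^{n+1} ≥ 0 for all i ∈ ℤ. -/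
/-- positivity of the Lax–Friedrichs type marching formula. -/
theorem LaxFriedrichs_positivity
    (f ν : ℝ → ℝ) (s : ℤ → ℝ) (c u unext : ℤ → ℝ)
    (lam Θ Lf Cν smin S : ℝ)
    (hlam : 0 < lam)
    (hLf : 0 ≤ Lf)
    (hf : ∀ a b : ℝ, |f a - f b| ≤ Lf * |a - b|)
    (hf0 : f 0 = 0)
    (hν : ∀ x : ℝ, |ν x| ≤ Cν)
    (hsmin : 0 < smin)
    (hs : ∀ i : ℤ, smin ≤ s i ∧ s i ≤ S)
    (hΘ : 0 < Θ ∧ Θ < 2 / (3 * S))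
    (hCFL : lam ≤ min 1 (min (4 - 6 * Θ * S) (6 * Θ * S)) / (1 + 6 * S * Lf * Cν))
    (F : ℝ → ℝ → ℝ → ℝ)
    (hF : ∀ a b c : ℝ, F a b c = a / 2 * (f b + f c) - Θ * (c - b) / (2 * lam))
    (hscheme : ∀ i : ℤ,
      unext i = u i
        - lam * (F (ν (c i)) (s i * u i) (s (i + 1) * u (i + 1))
            - F (ν (c (i - 1))) (s (i - 1) * u (i - 1)) (s i * u i)))
    (hpos : ∀ i : ℤ, 0 ≤ u i) :
    ∀ i : ℤ, 0 ≤ unext i := by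
  obtain ⟨hΘ0, hΘ2⟩ := hΘ
  have hS : 0 < S := lt_of_lt_of_le hsmin (le_trans (hs 0).1 (hs 0).2)
  have hCν : 0 ≤ Cν := le_trans (abs_nonneg _) (hν 0)
  have hden : 0 < 1 + 6 * S * Lf * Cν := by positivity
  have hmin : lam * (1 + 6 * S * Lf * Cν) ≤ min 1 (min (4 - 6 * Θ * S) (6 * Θ * S)) :=
    (le_div_iff₀ hden).mp hCFL
  have h1 : lam * (6 * S * Lf * Cν) ≤ 6 * Θ * S := by
    have := le_trans hmin (le_trans (min_le_right _ _) (min_le_right _ _))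
    nlinarith
  have h2 : lam * (6 * S * Lf * Cν) ≤ 4 - 6 * Θ * S := by
    have := le_trans hmin (le_trans (min_le_right _ _) (min_le_left _ _))
    nlinarith
  have hA : lam * (Lf * Cν) ≤ Θ := by nlinarith
  have hB : (Θ + lam * (Lf * Cν)) * S ≤ 1 := by nlinarith
  intro i
  have hb : ∀ j : ℤ, 0 ≤ s j * u j := fun j =>
    mul_nonneg (le_trans hsmin.le (hs j).1) (hpos j)
  have hfb : ∀ j : ℤ, |f (s j * u j)| ≤ Lf * (s j * u j) := by
    intro j
    have := hf (s j * u j) 0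
    simpa [hf0, abs_of_nonneg (hb j)] using this
  have hval : unext i = u i
      - lam / 2 * (ν (c i) * (f (s i * u i) + f (s (i + 1) * u (i + 1)))
          - ν (c (i - 1)) * (f (s (i - 1) * u (i - 1)) + f (s i * u i)))
      + Θ / 2 * (s (i + 1) * u (i + 1) - 2 * (s i * u i) + s (i - 1) * u (i - 1)) := by
    rw [hscheme i, hF, hF]
    field_simp
    ring
  rw [hval]
  have hbm : 0 ≤ s (i - 1) * u (i - 1) := hb _
  have hb0 : 0 ≤ s i * u i := hb _
  have hbp : 0 ≤ s (i + 1) * u (i + 1) := hb _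
  have hb0S : s i * u i ≤ S * u i := mul_le_mul_of_nonneg_right (hs i).2 (hpos i)
  have hPbound : ∀ (x : ℝ) (j : ℤ), |ν x * f (s j * u j)| ≤ Cν * (Lf * (s j * u j)) := by
    intro x j
    rw [abs_mul]
    exact mul_le_mul (hν x) (hfb j) (abs_nonneg _) hCν
  have h10 := abs_le.mp (hPbound (c i) i)
  have h1p := abs_le.mp (hPbound (c i) (i + 1))
  have h0m := abs_le.mp (hPbound (c (i - 1)) (i - 1))
  have h00 := abs_le.mp (hPbound (c (i - 1)) i)
  have e1 : lam * (-(Cν * (Lf * (s i * u i)))) ≤ lam * (ν (c i) * f (s i * u i)) :=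
    mul_le_mul_of_nonneg_left h10.1 hlam.le
  have e2 : lam * (-(Cν * (Lf * (s (i + 1) * u (i + 1))))) ≤
      lam * (ν (c i) * f (s (i + 1) * u (i + 1))) :=
    mul_le_mul_of_nonneg_left h1p.1 hlam.le
  have e3 : lam * (ν (c (i - 1)) * f (s (i - 1) * u (i - 1))) ≤
      lam * (Cν * (Lf * (s (i - 1) * u (i - 1)))) :=
    mul_le_mul_of_nonneg_left h0m.2 hlam.le
  have e4 : lam * (ν (c (i - 1)) * f (s i * u i)) ≤ lam * (Cν * (Lf * (s i * u i))) :=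
    mul_le_mul_of_nonneg_left h00.2 hlam.le
  have key1 : (Θ + lam * (Lf * Cν)) * (s i * u i) ≤ u i := by
    have h3 : 0 ≤ Θ + lam * (Lf * Cν) := by positivity
    calc (Θ + lam * (Lf * Cν)) * (s i * u i) ≤ (Θ + lam * (Lf * Cν)) * (S * u i) :=
          mul_le_mul_of_nonneg_left hb0S h3
      _ = ((Θ + lam * (Lf * Cν)) * S) * u i := by ring
      _ ≤ 1 * u i := mul_le_mul_of_nonneg_right hB (hpos i)
      _ = u i := one_mul _
  have key2 : 0 ≤ (Θ - lam * (Lf * Cν)) * (s (i + 1) * u (i + 1)) :=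
    mul_nonneg (sub_nonneg.mpr hA) hbp
  have key3 : 0 ≤ (Θ - lam * (Lf * Cν)) * (s (i - 1) * u (i - 1)) :=
    mul_nonneg (sub_nonneg.mpr hA) hbm
  nlinarith [e1, e2, e3, e4, key1, key2, key3]
end

section
/- Let H(c₋, c₊, a, b, c) = b − λ(F(ν(c₊), s b, s' c) − F(ν(c₋), s'' a, s b)) be a marching operator that is monotone nondecreasing in its last three arguments (for each fixed c₋, c₊), and suppose H(c₋, c₊, k_{i−1}, k_i, k_{i+1}) = k_i − λ f(α)(ν(c₊) − ν(c₋)) where k_j = α/s_j. Then for all real u_{i−1}, u_i, u_{i+1}: |u_i − k_i| − λ(G_{i+1/2}(u_i, u_{i+1}) − G_{i−1/2}(u_{i−1}, u_i)) ≥ |u_i^{new} − k_i| + λ f(α) sgn(u_i^{new} − k_i)(ν(c₊) − ν(c₋)), where u_i^{new} = H(c₋, c₊, u_{i−1}, u_i, u_{i+1}) and G_{i+1/2}(p,q) = F(ν(c₊), s_i max(p,k_i), s_{i+1} max(q,k_{i+1})) − F(ν(c₊), s_i min(p,k_i), s_{i+1} min(q,k_{i+1})). -/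
/-- Crandall–Majda type discrete entropy inequality for the
monotone marching operator. -/
theorem discrete_entropy_inequality
    (F : ℝ → ℝ → ℝ → ℝ) (ν f : ℝ → ℝ)
    (lam α cminus cplus sim si sip : ℝ)
    (hsim : 0 < sim) (hsi : 0 < si) (hsip : 0 < sip)
    (H : ℝ → ℝ → ℝ → ℝ)
    (hH : ∀ a b c : ℝ,
      H a b c = b - lam * (F (ν cplus) (si * b) (sip * c)
        - F (ν cminus) (sim * a) (si * b)))
    (hmono : ∀ a b c a' b' c' : ℝ,
      a ≤ a' → b ≤ b' → c ≤ c' → H a b c ≤ H a' b' c')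
    (kim ki kip : ℝ)
    (hkim : kim = α / sim) (hki : ki = α / si) (hkip : kip = α / sip)
    (hk : H kim ki kip = ki - lam * f α * (ν cplus - ν cminus))
    (Gp Gm : ℝ → ℝ → ℝ)
    (hGp : ∀ p q : ℝ,
      Gp p q = F (ν cplus) (si * max p ki) (sip * max q kip)
        - F (ν cplus) (si * min p ki) (sip * min q kip))
    (hGm : ∀ p q : ℝ,
      Gm p q = F (ν cminus) (sim * max p kim) (si * max q ki)
        - F (ν cminus) (sim * min p kim) (si * min q ki))
    (uim ui uip : ℝ) :
    |ui - ki| - lam * (Gp ui uip - Gm uim ui)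
      ≥ |H uim ui uip - ki|
        + lam * f α * Real.sign (H uim ui uip - ki) * (ν cplus - ν cminus) := by
  set A := H (max uim kim) (max ui ki) (max uip kip) with hA
  set B := H (min uim kim) (min ui ki) (min uip kip) with hB
  have hdiff : A - B = |ui - ki| - lam * (Gp ui uip - Gm uim ui) := by
    rw [hA, hB, hH, hH, hGp, hGm, ← max_sub_min_eq_abs, max_comm ki ui, min_comm ki ui]
    ring
  have h1 : H uim ui uip ≤ A := hmono _ _ _ _ _ _ (le_max_left _ _) (le_max_left _ _) (le_max_left _ _)
  have h2 : H kim ki kip ≤ A := hmono _ _ _ _ _ _ (le_max_right _ _) (le_max_right _ _) (le_max_right _ _)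
  have h3 : B ≤ H uim ui uip := hmono _ _ _ _ _ _ (min_le_left _ _) (min_le_left _ _) (min_le_left _ _)
  have h4 : B ≤ H kim ki kip := hmono _ _ _ _ _ _ (min_le_right _ _) (min_le_right _ _) (min_le_right _ _)
  have habs : |H uim ui uip - H kim ki kip| ≤ A - B := by
    rw [abs_sub_le_iff]; constructor <;> linarith
  set x := H uim ui uip - ki with hx
  have hHk : H uim ui uip - H kim ki kip = x + lam * f α * (ν cplus - ν cminus) := by
    rw [hk, hx]; ring
  have hsgn : Real.sign x * (x + lam * f α * (ν cplus - ν cminus))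
      ≤ |x + lam * f α * (ν cplus - ν cminus)| := by
    calc Real.sign x * (x + lam * f α * (ν cplus - ν cminus))
        ≤ |Real.sign x * (x + lam * f α * (ν cplus - ν cminus))| := le_abs_self _
      _ = |Real.sign x| * |x + lam * f α * (ν cplus - ν cminus)| := abs_mul _ _
      _ ≤ 1 * |x + lam * f α * (ν cplus - ν cminus)| := by
          apply mul_le_mul_of_nonneg_right _ (abs_nonneg _)
          rcases lt_trichotomy x 0 with h | h | h
          · rw [Real.sign_of_neg h]; norm_num
          · rw [h, Real.sign_zero]; norm_num
          · rw [Real.sign_of_pos h]; norm_num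
      _ = _ := one_mul _
  have hsx : Real.sign x * x = |x| := by
    rcases lt_trichotomy x 0 with h | h | h
    · rw [Real.sign_of_neg h, abs_of_neg h]; ring
    · simp [h]
    · rw [Real.sign_of_pos h, abs_of_pos h]; ring
  have : Real.sign x * (x + lam * f α * (ν cplus - ν cminus))
      = |x| + lam * f α * Real.sign x * (ν cplus - ν cminus) := by
    rw [mul_add, hsx]; ring
  rw [← hdiff]
  calc |x| + lam * f α * Real.sign x * (ν cplus - ν cminus)
      = Real.sign x * (x + lam * f α * (ν cplus - ν cminus)) := this.symm
    _ ≤ |x + lam * f α * (ν cplus - ν cminus)| := hsgn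
    _ = |H uim ui uip - H kim ki kip| := by rw [hHk]
    _ ≤ A - B := habs
end

section
/- Let the marching operator be u_i^{n+1} = H̃(ν(c^n_{i−1/2}), ν(c^n_{i+1/2}), s_{i−1}u_{i−1}^n, s_i u_i^n, s_{i+1}u_{i+1}^n)/s_i, where H̃ is, for fixed first two arguments, nondecreasing in each of its last three arguments and satisfies H̃(a, b, 1, 1, 1) = 1 for all a, b (which holds when f(0)=f(1)=0). If s_i ≥ 1 for all i and 0 ≤ s_i u_i^n ≤ 1 for all i, then 0 ≤ s_i u_i^{n+1} ≤ 1 for all i; in particular 0 ≤ u_i^{n+1} ≤ 1 (invariant region principle). -/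
/-- invariant region principle. -/
theorem invariant_region_principle
    (Htil : ℝ → ℝ → ℝ → ℝ → ℝ → ℝ) (ν : ℝ → ℝ)
    (s c u unext : ℤ → ℝ)
    (hmono : ∀ a b : ℝ, ∀ p q r p' q' r' : ℝ,
      p ≤ p' → q ≤ q' → r ≤ r' → Htil a b p q r ≤ Htil a b p' q' r')
    (hH1 : ∀ a b : ℝ, Htil a b 1 1 1 = 1)
    (hH0 : ∀ a b : ℝ, Htil a b 0 0 0 = 0)
    (hs : ∀ i : ℤ, 1 ≤ s i)
    (hscheme : ∀ i : ℤ,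
      s i * unext i
        = Htil (ν (c (i - 1))) (ν (c i))
            (s (i - 1) * u (i - 1)) (s i * u i) (s (i + 1) * u (i + 1)))
    (hbound : ∀ i : ℤ, 0 ≤ s i * u i ∧ s i * u i ≤ 1) :
    ∀ i : ℤ, (0 ≤ s i * unext i ∧ s i * unext i ≤ 1)
      ∧ (0 ≤ unext i ∧ unext i ≤ 1) := by
  intro i
  have hpos : ∀ j : ℤ, 0 < s j := fun j => lt_of_lt_of_le zero_lt_one (hs j)
  have h0 : 0 ≤ s i * unext i := by
    rw [hscheme i, ← hH0 (ν (c (i - 1))) (ν (c i))]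
    exact hmono _ _ _ _ _ _ _ _ (hbound _).1 (hbound _).1 (hbound _).1
  have h1 : s i * unext i ≤ 1 := by
    rw [hscheme i, ← hH1 (ν (c (i - 1))) (ν (c i))]
    exact hmono _ _ _ _ _ _ _ _ (hbound _).2 (hbound _).2 (hbound _).2
  refine ⟨⟨h0, h1⟩, ?_, ?_⟩
  · exact nonneg_of_mul_nonneg_right h0 (hpos i)
  · calc unext i ≤ s i * unext i := by
          nlinarith [nonneg_of_mul_nonneg_right h0 (hpos i), hs i]
      _ ≤ 1 := h1
end
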